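/- Every edge of G lies in exactly one of the 42 K_4-subgraphs indexed by ordered Fano lines, so G is the edge-disjoint union of 42 induced copies of K_4. -/

import Mathlib

set_option maxRecDepth 8000
set_option linter.constructorNameAsVariable false


/-- Points of the Fano plane: we use `1,…,7` inside `Fin 8`. -/
abbrev FPt := Fin 8

/-- The seven lines of the Fano plane. -/
def fanoLines : Finset (Finset FPt) :=
  {{1,2,3},{1,4,5},{1,6,7},{2,4,6},{2,5,7},{3,4,7},{3,5,6}}

/-- The seven points of the Fano plane. -/
def fanoPoints : Finset FPt := {1,2,3,4,5,6,7}

/-- `(p, pairs)` is an ordered pencil if for each `i`, `insert p (pairs i)`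
is a Fano line, and the three (2-element) pairs are distinct. -/
def IsPencil (v : FPt × (Fin 3 → Finset FPt)) : Prop :=
  v.1 ∈ fanoPoints ∧
  (∀ i, (v.2 i).card = 2 ∧ v.1 ∉ v.2 i ∧ insert v.1 (v.2 i) ∈ fanoLines) ∧
  Function.Injective v.2

instance : DecidablePred IsPencil := fun v => by
  unfold IsPencil Function.Injective; infer_instance

/-- Ordered pencils of the Fano plane: the vertices of the graph `G`. -/
def Pencil := {v : FPt × (Fin 3 → Finset FPt) // IsPencil v}

instance : DecidableEq Pencil := by unfold Pencil; infer_instance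
instance : Fintype Pencil := by unfold Pencil; infer_instance

/-- Adjacency: different base points, and the pairs in each position meet
in exactly one point. -/
def pAdj (v w : Pencil) : Prop :=
  v.1.1 ≠ w.1.1 ∧ ∀ i, (v.1.2 i ∩ w.1.2 i).card = 1

instance : DecidableRel pAdj := fun v w => by unfold pAdj; infer_instance

/-- The graph `G` on the 42 ordered pencils of the Fano plane. -/
def G : SimpleGraph Pencil where
  Adj := pAdj
  symm := ⟨fun v w h => ⟨h.1.symm, fun i => by rw [Finset.inter_comm]; exact h.2 i⟩⟩
  loopless := ⟨fun v h => h.1 rfl⟩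

instance : DecidableRel G.Adj := fun v w => by
  change Decidable (pAdj v w); infer_instance

/-- The tetrahedron (copy of `K₄`) associated to an ordered Fano line `(x,y,z)`. -/
def tetra (x y z : FPt) : Finset Pencil :=
  Finset.univ.filter (fun v =>
    v.1.1 ∉ ({x, y, z} : Finset FPt) ∧ x ∈ v.1.2 0 ∧ y ∈ v.1.2 1 ∧ z ∈ v.1.2 2)


def pairsThrough (p : FPt) : Finset (Finset FPt) :=
  (fanoLines.filter (fun L => p ∈ L)).image (fun L => L.erase p)

lemma pairs_mem {v : FPt × (Fin 3 → Finset FPt)} (h : IsPencil v) (i : Fin 3) :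
    v.2 i ∈ pairsThrough v.1 := by
  obtain ⟨hp, hl, hinj⟩ := h
  obtain ⟨hc, hn, hL⟩ := hl i
  exact Finset.mem_image.2 ⟨insert v.1 (v.2 i),
    Finset.mem_filter.2 ⟨hL, Finset.mem_insert_self _ _⟩, Finset.erase_insert hn⟩

def L42 : List (FPt × Finset FPt × Finset FPt × Finset FPt) := [
((1:FPt), ({2,3}:Finset FPt), ({4,5}:Finset FPt), ({6,7}:Finset FPt)),
((1:FPt), ({2,3}:Finset FPt), ({6,7}:Finset FPt), ({4,5}:Finset FPt)),
((1:FPt), ({4,5}:Finset FPt), ({2,3}:Finset FPt), ({6,7}:Finset FPt)),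
((1:FPt), ({4,5}:Finset FPt), ({6,7}:Finset FPt), ({2,3}:Finset FPt)),
((1:FPt), ({6,7}:Finset FPt), ({2,3}:Finset FPt), ({4,5}:Finset FPt)),
((1:FPt), ({6,7}:Finset FPt), ({4,5}:Finset FPt), ({2,3}:Finset FPt)),
((2:FPt), ({1,3}:Finset FPt), ({4,6}:Finset FPt), ({5,7}:Finset FPt)),
((2:FPt), ({1,3}:Finset FPt), ({5,7}:Finset FPt), ({4,6}:Finset FPt)),
((2:FPt), ({4,6}:Finset FPt), ({1,3}:Finset FPt), ({5,7}:Finset FPt)),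
((2:FPt), ({4,6}:Finset FPt), ({5,7}:Finset FPt), ({1,3}:Finset FPt)),
((2:FPt), ({5,7}:Finset FPt), ({1,3}:Finset FPt), ({4,6}:Finset FPt)),
((2:FPt), ({5,7}:Finset FPt), ({4,6}:Finset FPt), ({1,3}:Finset FPt)),
((3:FPt), ({1,2}:Finset FPt), ({4,7}:Finset FPt), ({5,6}:Finset FPt)),
((3:FPt), ({1,2}:Finset FPt), ({5,6}:Finset FPt), ({4,7}:Finset FPt)),
((3:FPt), ({4,7}:Finset FPt), ({1,2}:Finset FPt), ({5,6}:Finset FPt)),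
((3:FPt), ({4,7}:Finset FPt), ({5,6}:Finset FPt), ({1,2}:Finset FPt)),
((3:FPt), ({5,6}:Finset FPt), ({1,2}:Finset FPt), ({4,7}:Finset FPt)),
((3:FPt), ({5,6}:Finset FPt), ({4,7}:Finset FPt), ({1,2}:Finset FPt)),
((4:FPt), ({1,5}:Finset FPt), ({2,6}:Finset FPt), ({3,7}:Finset FPt)),
((4:FPt), ({1,5}:Finset FPt), ({3,7}:Finset FPt), ({2,6}:Finset FPt)),
((4:FPt), ({2,6}:Finset FPt), ({1,5}:Finset FPt), ({3,7}:Finset FPt)),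
((4:FPt), ({2,6}:Finset FPt), ({3,7}:Finset FPt), ({1,5}:Finset FPt)),
((4:FPt), ({3,7}:Finset FPt), ({1,5}:Finset FPt), ({2,6}:Finset FPt)),
((4:FPt), ({3,7}:Finset FPt), ({2,6}:Finset FPt), ({1,5}:Finset FPt)),
((5:FPt), ({1,4}:Finset FPt), ({2,7}:Finset FPt), ({3,6}:Finset FPt)),
((5:FPt), ({1,4}:Finset FPt), ({3,6}:Finset FPt), ({2,7}:Finset FPt)),
((5:FPt), ({2,7}:Finset FPt), ({1,4}:Finset FPt), ({3,6}:Finset FPt)),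
((5:FPt), ({2,7}:Finset FPt), ({3,6}:Finset FPt), ({1,4}:Finset FPt)),
((5:FPt), ({3,6}:Finset FPt), ({1,4}:Finset FPt), ({2,7}:Finset FPt)),
((5:FPt), ({3,6}:Finset FPt), ({2,7}:Finset FPt), ({1,4}:Finset FPt)),
((6:FPt), ({1,7}:Finset FPt), ({2,4}:Finset FPt), ({3,5}:Finset FPt)),
((6:FPt), ({1,7}:Finset FPt), ({3,5}:Finset FPt), ({2,4}:Finset FPt)),
((6:FPt), ({2,4}:Finset FPt), ({1,7}:Finset FPt), ({3,5}:Finset FPt)),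
((6:FPt), ({2,4}:Finset FPt), ({3,5}:Finset FPt), ({1,7}:Finset FPt)),
((6:FPt), ({3,5}:Finset FPt), ({1,7}:Finset FPt), ({2,4}:Finset FPt)),
((6:FPt), ({3,5}:Finset FPt), ({2,4}:Finset FPt), ({1,7}:Finset FPt)),
((7:FPt), ({1,6}:Finset FPt), ({2,5}:Finset FPt), ({3,4}:Finset FPt)),
((7:FPt), ({1,6}:Finset FPt), ({3,4}:Finset FPt), ({2,5}:Finset FPt)),
((7:FPt), ({2,5}:Finset FPt), ({1,6}:Finset FPt), ({3,4}:Finset FPt)),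
((7:FPt), ({2,5}:Finset FPt), ({3,4}:Finset FPt), ({1,6}:Finset FPt)),
((7:FPt), ({3,4}:Finset FPt), ({1,6}:Finset FPt), ({2,5}:Finset FPt)),
((7:FPt), ({3,4}:Finset FPt), ({2,5}:Finset FPt), ({1,6}:Finset FPt))]

set_option synthInstance.maxSize 4000 in
set_option maxRecDepth 4000 in
set_option linter.constructorNameAsVariable false in
lemma mem_L42 : ∀ p ∈ fanoPoints, ∀ A ∈ pairsThrough p, ∀ B ∈ pairsThrough p,
    ∀ C ∈ pairsThrough p, A ≠ B → A ≠ C → B ≠ C → (p, A, B, C) ∈ L42 := by decide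

set_option maxRecDepth 8000 in
set_option linter.constructorNameAsVariable false in
lemma core2 : ∀ d ∈ L42, ∀ d' ∈ L42, d.1 ≠ d'.1 →
  (d.2.1 ∩ d'.2.1).card = 1 → (d.2.2.1 ∩ d'.2.2.1).card = 1 → (d.2.2.2 ∩ d'.2.2.2).card = 1 →
  ((d.2.1 ∩ d'.2.1) ∪ (d.2.2.1 ∩ d'.2.2.1) ∪ (d.2.2.2 ∩ d'.2.2.2)) ∈ fanoLines ∧
  d.1 ∉ ((d.2.1 ∩ d'.2.1) ∪ (d.2.2.1 ∩ d'.2.2.1) ∪ (d.2.2.2 ∩ d'.2.2.2)) ∧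
  d'.1 ∉ ((d.2.1 ∩ d'.2.1) ∪ (d.2.2.1 ∩ d'.2.2.1) ∪ (d.2.2.2 ∩ d'.2.2.2)) := by decide

theorem edge_in_unique_tetra :
    ∀ v w : Pencil, G.Adj v w →
      ∃! t : FPt × FPt × FPt,
        ({t.1, t.2.1, t.2.2} : Finset FPt) ∈ fanoLines ∧
        v ∈ tetra t.1 t.2.1 t.2.2 ∧ w ∈ tetra t.1 t.2.1 t.2.2 := by
  intro v w hadj
  obtain ⟨hne, hcard⟩ := hadj
  have hv := v.2
  have hw := w.2
  have hdv : (v.1.1, v.1.2 0, v.1.2 1, v.1.2 2) ∈ L42 :=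
    mem_L42 _ hv.1 _ (pairs_mem hv 0) _ (pairs_mem hv 1) _ (pairs_mem hv 2)
      (fun h => absurd (hv.2.2 h) (by decide))
      (fun h => absurd (hv.2.2 h) (by decide))
      (fun h => absurd (hv.2.2 h) (by decide))
  have hdw : (w.1.1, w.1.2 0, w.1.2 1, w.1.2 2) ∈ L42 :=
    mem_L42 _ hw.1 _ (pairs_mem hw 0) _ (pairs_mem hw 1) _ (pairs_mem hw 2)
      (fun h => absurd (hw.2.2 h) (by decide))
      (fun h => absurd (hw.2.2 h) (by decide))
      (fun h => absurd (hw.2.2 h) (by decide))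
  have hc : ((v.1.2 0 ∩ w.1.2 0) ∪ (v.1.2 1 ∩ w.1.2 1) ∪ (v.1.2 2 ∩ w.1.2 2)) ∈ fanoLines ∧
      v.1.1 ∉ ((v.1.2 0 ∩ w.1.2 0) ∪ (v.1.2 1 ∩ w.1.2 1) ∪ (v.1.2 2 ∩ w.1.2 2)) ∧
      w.1.1 ∉ ((v.1.2 0 ∩ w.1.2 0) ∪ (v.1.2 1 ∩ w.1.2 1) ∪ (v.1.2 2 ∩ w.1.2 2)) :=
    core2 _ hdv _ hdw hne (hcard 0) (hcard 1) (hcard 2)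
  obtain ⟨x, hx⟩ := Finset.card_eq_one.1 (hcard 0)
  obtain ⟨y, hy⟩ := Finset.card_eq_one.1 (hcard 1)
  obtain ⟨z, hz⟩ := Finset.card_eq_one.1 (hcard 2)
  have huni : ({x} ∪ ({y} ∪ {z}) : Finset FPt) = {x, y, z} := by ext t; simp [or_assoc]; tauto
  rw [hx, hy, hz, Finset.union_assoc, huni] at hc
  obtain ⟨hline, hpv, hpw⟩ := hc
  have hxm : x ∈ v.1.2 0 ∩ w.1.2 0 := hx ▸ Finset.mem_singleton_self x
  have hym : y ∈ v.1.2 1 ∩ w.1.2 1 := hy ▸ Finset.mem_singleton_self y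
  have hzm : z ∈ v.1.2 2 ∩ w.1.2 2 := hz ▸ Finset.mem_singleton_self z
  refine ⟨(x, y, z), ⟨hline, ?_, ?_⟩, ?_⟩
  · simp only [tetra, Finset.mem_filter, Finset.mem_univ, true_and]
    exact ⟨hpv, (Finset.mem_inter.1 hxm).1, (Finset.mem_inter.1 hym).1,
      (Finset.mem_inter.1 hzm).1⟩
  · simp only [tetra, Finset.mem_filter, Finset.mem_univ, true_and]
    exact ⟨hpw, (Finset.mem_inter.1 hxm).2, (Finset.mem_inter.1 hym).2,
      (Finset.mem_inter.1 hzm).2⟩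
  · rintro ⟨x', y', z'⟩ ⟨hl', hv', hw'⟩
    simp only [tetra, Finset.mem_filter, Finset.mem_univ, true_and] at hv' hw'
    have hx' : x' = x := Finset.mem_singleton.1
      (hx ▸ Finset.mem_inter.2 ⟨hv'.2.1, hw'.2.1⟩)
    have hy' : y' = y := Finset.mem_singleton.1
      (hy ▸ Finset.mem_inter.2 ⟨hv'.2.2.1, hw'.2.2.1⟩)
    have hz' : z' = z := Finset.mem_singleton.1
      (hz ▸ Finset.mem_inter.2 ⟨hv'.2.2.2, hw'.2.2.2⟩)
    subst hx'; subst hy'; subst hz'; rfl
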